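/- Let P be an n-gon (n ≥ 3) with a dissection D, let α ≠ β be vertices of P, let K be a semifield and f : diag(P) → K any map. Then Σ_{π ∈ T(α→β)} f(π) = Σ_{ρ ∈ T(β→α)} f(ρ), where the sums range over the T-paths from α to β, respectively from β to α, with respect to D. -/

import Mathlib

/-!
Common definitions: polygons with vertex set `ZMod n`, crossing of diagonals,
dissections, (weak) friezes with values in a semifield, and T-paths.
-/

/-- A *semifield* in the sense of the paper: a set `K` with a commutative, associative
addition and a multiplication making `K` a commutative group, such that multiplication
distributes over addition.  (There is no zero and no subtraction.) -/
class PaperSemifield (K : Type*) extends CommGroup K, AddCommSemigroup K where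
  mul_add' : ∀ a b c : K, a * (b + c) = a * b + a * c

/-- Position of the vertex `x` of the `n`-gon relative to the vertex `a`, going around
the polygon in the positive direction; `relPos n a x = 0` iff `x = a`. -/
def relPos (n : ℕ) (a x : ZMod n) : ℕ := (x - a).val

/-- The vertices `a, b, c, d` of the `n`-gon appear strictly in this cyclic order. -/
def CyclicallyOrdered (n : ℕ) (a b c d : ZMod n) : Prop :=
  0 < relPos n a b ∧ relPos n a b < relPos n a c ∧ relPos n a c < relPos n a d

/-- The diagonals `{a,b}` and `{c,d}` of the `n`-gon *cross*: the four vertices are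
distinct and appear in the cyclic order `a, c, b, d` or `a, d, b, c`. -/
def Crosses (n : ℕ) (a b c d : ZMod n) : Prop :=
  CyclicallyOrdered n a c b d ∨ CyclicallyOrdered n a d b c

/-- `{a, b}` is an edge of the `n`-gon, i.e. joins neighbouring vertices. -/
def IsEdge (n : ℕ) (a b : ZMod n) : Prop := b = a + 1 ∨ a = b + 1

/-- `{a, b}` is an internal diagonal of the `n`-gon. -/
def IsInternalDiag (n : ℕ) (a b : ZMod n) : Prop := a ≠ b ∧ ¬ IsEdge n a b

/-- `w'` is the successor of `w` in the induced cyclic order of the subpolygon of the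
`n`-gon with vertex set `W`. -/
def NextIn (n : ℕ) (W : Set (ZMod n)) (w w' : ZMod n) : Prop :=
  w ∈ W ∧ w' ∈ W ∧ w' ≠ w ∧ ∀ u ∈ W, relPos n w u = 0 ∨ relPos n w w' ≤ relPos n w u

/-- `D` is a dissection of the subpolygon of the `n`-gon with vertex set `W`: a set of
pairwise non-crossing diagonals of the subpolygon joining non-neighbouring vertices. -/
def IsDissectionOf (n : ℕ) (W : Set (ZMod n)) (D : Set (Sym2 (ZMod n))) : Prop :=
  (∀ a b, s(a, b) ∈ D → a ∈ W ∧ b ∈ W ∧ a ≠ b ∧ ¬ NextIn n W a b ∧ ¬ NextIn n W b a) ∧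
  (∀ a b c d, s(a, b) ∈ D → s(c, d) ∈ D → ¬ Crosses n a b c d)

/-- `D` is a dissection of the `n`-gon. -/
def IsDissection (n : ℕ) (D : Set (Sym2 (ZMod n))) : Prop :=
  IsDissectionOf n Set.univ D

/-- `f` is symmetric on pairs of vertices from `W`, i.e. represents a map defined on
unordered diagonals of the subpolygon with vertex set `W`. -/
def SymmOn (n : ℕ) {K : Type*} (W : Set (ZMod n)) (f : ZMod n → ZMod n → K) : Prop :=
  ∀ a b, a ∈ W → b ∈ W → f a b = f b a

/-- The Ptolemy relation for `f` at the crossing diagonals `{a,b}` and `{c,d}`. -/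
def PtolemyRel {n : ℕ} {K : Type*} [Mul K] [Add K]
    (f : ZMod n → ZMod n → K) (a b c d : ZMod n) : Prop :=
  f a b * f c d = f a c * f b d + f a d * f b c

/-- `f` is a weak frieze on the subpolygon with vertex set `W` with respect to `D`:
the Ptolemy relation holds whenever `{a,b}` and `{c,d}` are crossing diagonals of the
subpolygon with `{c,d} ∈ D`. -/
def IsWeakFriezeOn (n : ℕ) {K : Type*} [Mul K] [Add K] (W : Set (ZMod n))
    (D : Set (Sym2 (ZMod n))) (f : ZMod n → ZMod n → K) : Prop :=
  ∀ a b c d : ZMod n, a ∈ W → b ∈ W → c ∈ W → d ∈ W →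
    Crosses n a b c d → s(c, d) ∈ D → PtolemyRel f a b c d

/-- `f` is a weak frieze on the `n`-gon with respect to the dissection `D`. -/
def IsWeakFrieze (n : ℕ) {K : Type*} [Mul K] [Add K]
    (D : Set (Sym2 (ZMod n))) (f : ZMod n → ZMod n → K) : Prop :=
  IsWeakFriezeOn n Set.univ D f

/-- `f` is a frieze on the subpolygon with vertex set `W`: the Ptolemy relation holds
for all crossing diagonals of the subpolygon. -/
def IsFriezeOn (n : ℕ) {K : Type*} [Mul K] [Add K] (W : Set (ZMod n))
    (f : ZMod n → ZMod n → K) : Prop :=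
  ∀ a b c d : ZMod n, a ∈ W → b ∈ W → c ∈ W → d ∈ W →
    Crosses n a b c d → PtolemyRel f a b c d

/-- `f` is a frieze on the `n`-gon. -/
def IsFrieze (n : ℕ) {K : Type*} [Mul K] [Add K] (f : ZMod n → ZMod n → K) : Prop :=
  IsFriezeOn n Set.univ f

/-- The vertices of the `n`-gon realised as a regular convex `n`-gon in the Euclidean
plane. -/
noncomputable def vtx (n : ℕ) (a : ZMod n) : ℝ × ℝ :=
  (Real.cos (2 * Real.pi * (a.val : ℝ) / n), Real.sin (2 * Real.pi * (a.val : ℝ) / n))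

/-- The point with parameter `t` on the segment from `A` to `B`. -/
def segPt (A B : ℝ × ℝ) (t : ℝ) : ℝ × ℝ :=
  ((1 - t) * A.1 + t * B.1, (1 - t) * A.2 + t * B.2)

/-- In the regular realisation of the `n`-gon, the diagonal `{c,d}` crosses the diagonal
`{a,b}` at the interior point with parameter `t` along the segment from `a` to `b`. -/
def CrossesAt (n : ℕ) (a b c d : ZMod n) (t : ℝ) : Prop :=
  0 < t ∧ t < 1 ∧ ∃ s : ℝ, 0 < s ∧ s < 1 ∧
    segPt (vtx n a) (vtx n b) t = segPt (vtx n c) (vtx n d) s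

/-- `l` is a T-path from `a` to `b` with respect to `D` in the subpolygon of the `n`-gon
with vertex set `W`.  Writing `p = l.length` and `π_i = l.getD (i-1) 0` (so the paper's
`π_1, …, π_p` are the entries of `l`), the conditions are: the path starts at `a` and
ends at `b`, uses vertices of `W`; (i) the consecutive pairs are pairwise different
diagonals; (ii) no step crosses a diagonal in `D`; (iii) the steps starting at an
even position (in the paper's 1-based numbering) are diagonals in `D` which cross the
diagonal `{a,b}` at pairwise different points progressing monotonically in the
direction from `a` to `b`. -/
def IsTPathOn (n : ℕ) (W : Set (ZMod n)) (D : Set (Sym2 (ZMod n))) (a b : ZMod n)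
    (l : List (ZMod n)) : Prop :=
  2 ≤ l.length ∧
  l.getD 0 0 = a ∧
  l.getD (l.length - 1) 0 = b ∧
  (∀ i, i < l.length → l.getD i 0 ∈ W) ∧
  (∀ i, i + 1 < l.length → l.getD i 0 ≠ l.getD (i + 1) 0) ∧
  (∀ i j, i < j → j + 1 < l.length →
    s(l.getD i 0, l.getD (i + 1) 0) ≠ s(l.getD j 0, l.getD (j + 1) 0)) ∧
  (∀ i, i + 1 < l.length → ∀ c d, s(c, d) ∈ D →
    ¬ Crosses n (l.getD i 0) (l.getD (i + 1) 0) c d) ∧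
  (∀ i, Odd i → i + 1 < l.length → s(l.getD i 0, l.getD (i + 1) 0) ∈ D) ∧
  (∃ t : ℕ → ℝ,
    (∀ i, Odd i → i + 1 < l.length → CrossesAt n a b (l.getD i 0) (l.getD (i + 1) 0) (t i)) ∧
    (∀ i j, Odd i → Odd j → i < j → j + 1 < l.length → t i < t j))

/-- `l` is a T-path from `a` to `b` with respect to `D` in the `n`-gon. -/
def IsTPath (n : ℕ) (D : Set (Sym2 (ZMod n))) (a b : ZMod n) (l : List (ZMod n)) : Prop :=
  IsTPathOn n Set.univ D a b l

open Classical in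
/-- The (finite) set of all T-paths from `a` to `b` with respect to `D` in the
subpolygon with vertex set `W`.  (Any T-path has pairwise different steps, hence has
length at most `n * n + 1`, so this finite set contains all of them.) -/
noncomputable def TPathFinsetOn (n : ℕ) [NeZero n] (W : Set (ZMod n))
    (D : Set (Sym2 (ZMod n))) (a b : ZMod n) : Finset (List (ZMod n)) :=
  ((Finset.range (n * n + 2)).biUnion fun k =>
    (Finset.univ : Finset (Fin k → ZMod n)).image List.ofFn).filter (IsTPathOn n W D a b)

/-- The (finite) set of all T-paths from `a` to `b` with respect to `D` in the `n`-gon. -/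
noncomputable def TPathFinset (n : ℕ) [NeZero n] (D : Set (Sym2 (ZMod n))) (a b : ZMod n) :
    Finset (List (ZMod n)) :=
  TPathFinsetOn n Set.univ D a b

/-- The weight `f(π)` of a T-path `l`: the product of the values of `f` on the steps at
odd positions (1-based) divided by the product of the values on the steps at even
positions. -/
def pathWeight (n : ℕ) {K : Type*} [CommGroup K] (f : ZMod n → ZMod n → K)
    (l : List (ZMod n)) : K :=
  (∏ i ∈ (Finset.range (l.length - 1)).filter (fun i => Even i),
      f (l.getD i 0) (l.getD (i + 1) 0)) /
  (∏ i ∈ (Finset.range (l.length - 1)).filter (fun i => Odd i),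
      f (l.getD i 0) (l.getD (i + 1) 0))

/-- `f` satisfies the T-path formula with respect to `D` on the subpolygon with vertex
set `W`: for all vertices `a ≠ b` of the subpolygon, `f a b` is the sum of the weights
of all T-paths from `a` to `b`.  Since the semifield `K` has no zero element, the sum is
computed in `WithZero K` (the sum is in fact always a sum of a nonempty collection). -/
def SatisfiesTPathFormulaOn (n : ℕ) [NeZero n] {K : Type*} [PaperSemifield K]
    (W : Set (ZMod n)) (D : Set (Sym2 (ZMod n))) (f : ZMod n → ZMod n → K) : Prop :=
  ∀ a b : ZMod n, a ∈ W → b ∈ W → a ≠ b →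
    WithZero.coe (f a b) = ∑ l ∈ TPathFinsetOn n W D a b, WithZero.coe (pathWeight n f l)

/-- `f` satisfies the T-path formula with respect to `D` on the `n`-gon. -/
def SatisfiesTPathFormula (n : ℕ) [NeZero n] {K : Type*} [PaperSemifield K]
    (D : Set (Sym2 (ZMod n))) (f : ZMod n → ZMod n → K) : Prop :=
  SatisfiesTPathFormulaOn n Set.univ D f

/-- `W` is the vertex set of one of the subpolygons into which the pairwise non-crossing
internal diagonals `E` divide the `n`-gon: `W` has at least three vertices, consecutive
vertices of `W` are joined by an edge of the polygon or by a diagonal in `E`, and no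
diagonal in `E` cuts through `W`. -/
def IsCell (n : ℕ) (E : Set (Sym2 (ZMod n))) (W : Set (ZMod n)) : Prop :=
  3 ≤ W.ncard ∧
  (∀ w w', NextIn n W w w' → (w' = w + 1 ∨ s(w, w') ∈ E)) ∧
  (∀ c d, s(c, d) ∈ E → c ∈ W → d ∈ W → (NextIn n W c d ∨ NextIn n W d c))

/-! ### Auxiliary lemmas for `tPath_sum_reverse` -/

namespace TPRaux

open Real

/-- Key trigonometric identity (after double-angle/difference expansion). -/
lemma trig_key (u v w : ℝ) :
    (cos (2*v) - cos (2*u)) * (sin (2*w) - sin (2*u))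
      - (sin (2*v) - sin (2*u)) * (cos (2*w) - cos (2*u))
    = -4 * sin (v-u) * sin (w-u) * sin (v-w) := by
  simp only [Real.cos_two_mul, Real.sin_two_mul, Real.sin_sub]
  linear_combination
    (-4*sin w*cos w + 4*sin v*cos v - 4*sin v*cos v*sin w^2 + 4*sin v^2*sin w*cos w)
        * Real.sin_sq_add_cos_sq u
    + (4*sin w*cos w - 4*sin u*cos u + 4*sin u*cos u*sin w^2 - 4*sin u^2*sin w*cos w)
        * Real.sin_sq_add_cos_sq v
    + (-4*sin v*cos v + 4*sin u*cos u - 4*sin u*cos u*sin v^2 + 4*sin u^2*sin v*cos v)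
        * Real.sin_sq_add_cos_sq w

/-- Signed area / cross product of `B - A` and `P - A`. -/
def cr (A B P : ℝ × ℝ) : ℝ := (B.1 - A.1) * (P.2 - A.2) - (B.2 - A.2) * (P.1 - A.1)

lemma cr_segPt (A B C D : ℝ × ℝ) (s : ℝ) :
    cr A B (segPt C D s) = (1-s) * cr A B C + s * cr A B D := by
  simp only [cr, segPt]; ring

lemma cr_segPt_self (A B : ℝ × ℝ) (t : ℝ) : cr A B (segPt A B t) = 0 := by
  simp only [cr, segPt]; ring

lemma segPt_comm (A B : ℝ × ℝ) (t : ℝ) : segPt B A (1-t) = segPt A B t := by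
  simp only [segPt, Prod.mk.injEq]; constructor <;> ring

section ZModFacts

variable {n : ℕ} [NeZero n]

lemma relPos_lt (a x : ZMod n) : relPos n a x < n := ZMod.val_lt _

lemma relPos_eq_zero_iff {a x : ZMod n} : relPos n a x = 0 ↔ x = a := by
  unfold relPos
  rw [ZMod.val_eq_zero, sub_eq_zero]

lemma relPos_pos {a x : ZMod n} (h : x ≠ a) : 0 < relPos n a x :=
  Nat.pos_of_ne_zero (fun h0 => h (relPos_eq_zero_iff.mp h0))

lemma relPos_inj {a x y : ZMod n} (h : relPos n a x = relPos n a y) : x = y :=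
  sub_left_inj.mp (ZMod.val_injective n h)

lemma relPos_decomp (a x : ZMod n) :
    ∃ k : ℤ, (x.val : ℤ) - (a.val : ℤ) = (relPos n a x : ℤ) + k * n := by
  have h : ((((x.val : ℤ) - (a.val : ℤ) - ((x - a).val : ℤ)) : ℤ) : ZMod n) = 0 := by
    push_cast
    rw [ZMod.natCast_val, ZMod.natCast_val, ZMod.natCast_val, ZMod.cast_id, ZMod.cast_id,
      ZMod.cast_id]
    ring
  rw [ZMod.intCast_zmod_eq_zero_iff_dvd] at h
  obtain ⟨k, hk⟩ := h
  rw [mul_comm] at hk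
  refine ⟨k, ?_⟩
  show (x.val : ℤ) - (a.val : ℤ) = (((x - a).val : ℕ) : ℤ) + k * n
  linarith [hk]

lemma vtx_inj {x y : ZMod n} (h : vtx n x = vtx n y) : x = y := by
  have hn : (0:ℝ) < n := by exact_mod_cast (NeZero.pos n)
  have hc : Real.cos (2*π*(x.val:ℝ)/n) = Real.cos (2*π*(y.val:ℝ)/n) := congrArg Prod.fst h
  have hs : Real.sin (2*π*(x.val:ℝ)/n) = Real.sin (2*π*(y.val:ℝ)/n) := congrArg Prod.snd h
  have hang := Real.Angle.cos_sin_inj hc hs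
  rw [Real.Angle.angle_eq_iff_two_pi_dvd_sub] at hang
  obtain ⟨k, hk⟩ := hang
  have hne : (2:ℝ)*π ≠ 0 := by positivity
  have h3 : (2*π) * (((x.val:ℝ) - y.val)/n) = (2*π) * k := by linear_combination hk
  have h2 : ((x.val:ℝ) - y.val)/n = (k:ℝ) := mul_left_cancel₀ hne h3
  have h4 : (x.val:ℝ) - y.val = (k:ℝ) * n := by
    rw [div_eq_iff (ne_of_gt hn)] at h2
    exact h2
  have hZ : (x.val:ℤ) - y.val = k * n := by exact_mod_cast h4
  have hx := ZMod.val_lt x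
  have hy := ZMod.val_lt y
  have hnZ : (0:ℤ) < n := by exact_mod_cast NeZero.pos n
  have hx' : (x.val:ℤ) < n := by exact_mod_cast hx
  have hy' : (y.val:ℤ) < n := by exact_mod_cast hy
  have hx0 : (0:ℤ) ≤ (x.val:ℤ) := by positivity
  have hy0 : (0:ℤ) ≤ (y.val:ℤ) := by positivity
  have hk0 : k = 0 := by
    rcases lt_trichotomy k 0 with hh | hh | hh
    · have h5 : k * (n:ℤ) ≤ -1 * n :=
        mul_le_mul_of_nonneg_right (by omega) (le_of_lt hnZ)
      linarith
    · exact hh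
    · have h5 : 1 * (n:ℤ) ≤ k * n :=
        mul_le_mul_of_nonneg_right (by omega) (le_of_lt hnZ)
      linarith
  rw [hk0] at hZ
  simp only [zero_mul] at hZ
  have : x.val = y.val := by omega
  exact ZMod.val_injective n this

lemma vtx_norm (y : ZMod n) : (vtx n y).1^2 + (vtx n y).2^2 = 1 := by
  show (Real.cos _)^2 + (Real.sin _)^2 = 1
  exact Real.cos_sq_add_sin_sq _

lemma cr_vtx (a b x : ZMod n) :
    cr (vtx n a) (vtx n b) (vtx n x)
      = -4 * sin (π * (relPos n a b : ℝ) / n) * sin (π * (relPos n a x : ℝ) / n)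
          * sin (π * ((relPos n a b : ℝ) - (relPos n a x : ℝ)) / n) := by
  have hn : (n:ℝ) ≠ 0 := Nat.cast_ne_zero.mpr (NeZero.ne n)
  obtain ⟨kb, hkb⟩ := relPos_decomp a b
  obtain ⟨kx, hkx⟩ := relPos_decomp a x
  have hkbR : (b.val:ℝ) - a.val = (relPos n a b : ℝ) + (kb:ℝ)*n := by exact_mod_cast hkb
  have hkxR : (x.val:ℝ) - a.val = (relPos n a x : ℝ) + (kx:ℝ)*n := by exact_mod_cast hkx
  have key := trig_key (π*(a.val:ℝ)/n) (π*(b.val:ℝ)/n) (π*(x.val:ℝ)/n)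
  set N : ℝ := (n:ℝ) with hN
  set A : ℝ := (a.val:ℝ) with hA
  set B : ℝ := (b.val:ℝ) with hB
  set X : ℝ := (x.val:ℝ) with hX
  set RB : ℝ := (relPos n a b : ℝ) with hRB
  set RX : ℝ := (relPos n a x : ℝ) with hRX
  have hvu : π*B/N - π*A/N = π*RB/N + (kb:ℝ)*π := by
    field_simp
    linear_combination hkbR
  have hwu : π*X/N - π*A/N = π*RX/N + (kx:ℝ)*π := by
    field_simp
    linear_combination hkxR
  have hvw : π*B/N - π*X/N = π*(RB - RX)/N + ((kb - kx : ℤ):ℝ)*π := by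
    push_cast
    field_simp
    linear_combination hkbR - hkxR
  rw [hvu, hwu, hvw, Real.sin_add_int_mul_pi, Real.sin_add_int_mul_pi,
    Real.sin_add_int_mul_pi] at key
  have hgoal : cr (vtx n a) (vtx n b) (vtx n x)
      = (cos (2*(π*B/N)) - cos (2*(π*A/N))) * (sin (2*(π*X/N)) - sin (2*(π*A/N)))
        - (sin (2*(π*B/N)) - sin (2*(π*A/N))) * (cos (2*(π*X/N)) - cos (2*(π*A/N))) := by
    simp only [cr, vtx, hA, hB, hX, hN]
    rw [show 2*π*(a.val:ℝ)/(n:ℝ) = 2*(π*(a.val:ℝ)/(n:ℝ)) by ring,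
      show 2*π*(b.val:ℝ)/(n:ℝ) = 2*(π*(b.val:ℝ)/(n:ℝ)) by ring,
      show 2*π*(x.val:ℝ)/(n:ℝ) = 2*(π*(x.val:ℝ)/(n:ℝ)) by ring]
  rw [hgoal, key]
  clear hgoal key
  have hsign : ((-1:ℝ)^kb) * ((-1:ℝ)^kx) * ((-1:ℝ)^(kb-kx)) = 1 := by
    rw [← zpow_add₀ (by norm_num : (-1:ℝ) ≠ 0), ← zpow_add₀ (by norm_num : (-1:ℝ) ≠ 0),
      show kb + kx + (kb - kx) = 2*kb by ring, zpow_mul]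
    norm_num
  linear_combination (-4 * sin (π*RB/N) * sin (π*RX/N) * sin (π*(RB - RX)/N)) * hsign

lemma sin_pos_frac' {m : ℕ} {x : ℝ} (h0 : 0 < x) (h1 : x < m) : 0 < Real.sin (π * x / m) := by
  have hm : (0:ℝ) < m := lt_trans h0 h1
  apply Real.sin_pos_of_pos_of_lt_pi
  · exact div_pos (mul_pos Real.pi_pos h0) hm
  · rw [div_lt_iff₀ hm]
    nlinarith [Real.pi_pos]

lemma cr_neg {a b x : ZMod n} (ha : x ≠ a) (hb0 : 0 < relPos n a b)
    (hlt : relPos n a x < relPos n a b) :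
    cr (vtx n a) (vtx n b) (vtx n x) < 0 := by
  rw [cr_vtx]
  have hbn := relPos_lt a b
  have h1 : 0 < sin (π * (relPos n a b : ℝ)/n) :=
    sin_pos_frac' (by exact_mod_cast hb0) (by exact_mod_cast hbn)
  have h2 : 0 < sin (π * (relPos n a x : ℝ)/n) :=
    sin_pos_frac' (by exact_mod_cast relPos_pos ha)
      (by exact_mod_cast relPos_lt a x)
  have h3 : 0 < sin (π * ((relPos n a b : ℝ) - (relPos n a x : ℝ))/n) := by
    apply sin_pos_frac'
    · have : (relPos n a x : ℝ) < (relPos n a b : ℝ) := by exact_mod_cast hlt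
      linarith
    · have h4 : (relPos n a b : ℝ) < n := by exact_mod_cast hbn
      have h5 : (0:ℝ) ≤ (relPos n a x : ℝ) := Nat.cast_nonneg _
      linarith
  nlinarith [mul_pos (mul_pos h1 h2) h3]

lemma cr_pos {a b x : ZMod n} (hb0 : 0 < relPos n a b)
    (hlt : relPos n a b < relPos n a x) :
    0 < cr (vtx n a) (vtx n b) (vtx n x) := by
  rw [cr_vtx]
  have hxn := relPos_lt a x
  have h1 : 0 < sin (π * (relPos n a b : ℝ)/n) :=
    sin_pos_frac' (by exact_mod_cast hb0) (by exact_mod_cast (lt_trans hlt hxn))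
  have h2 : 0 < sin (π * (relPos n a x : ℝ)/n) :=
    sin_pos_frac' (by exact_mod_cast (lt_trans hb0 hlt)) (by exact_mod_cast hxn)
  have h3 : sin (π * ((relPos n a b : ℝ) - (relPos n a x : ℝ))/n) < 0 := by
    have hpos : 0 < sin (π * ((relPos n a x : ℝ) - (relPos n a b : ℝ))/n) := by
      apply sin_pos_frac'
      · have : (relPos n a b : ℝ) < (relPos n a x : ℝ) := by exact_mod_cast hlt
        linarith
      · have h4 : (relPos n a x : ℝ) < n := by exact_mod_cast hxn
        have h5 : (0:ℝ) ≤ (relPos n a b : ℝ) := Nat.cast_nonneg _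
        linarith
    rw [show π * ((relPos n a b : ℝ) - (relPos n a x : ℝ))/n
        = -(π * ((relPos n a x : ℝ) - (relPos n a b : ℝ))/n) by ring, Real.sin_neg]
    linarith
  nlinarith [mul_neg_of_pos_of_neg (mul_pos h1 h2) h3]

/-- If `{c,d}` does not combinatorially cross `{a,b}` (and shares no vertex with it),
then the corresponding chords do not cross geometrically. -/
lemma not_crossesAt {a b c d : ZMod n} (hab : a ≠ b)
    (hca : c ≠ a) (hcb : c ≠ b) (hda : d ≠ a) (hdb : d ≠ b)
    (hX : ¬ Crosses n a b c d) (t : ℝ) : ¬ CrossesAt n a b c d t := by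
  rintro ⟨ht0, ht1, s, hs0, hs1, heq⟩
  have hzero : cr (vtx n a) (vtx n b) (segPt (vtx n c) (vtx n d) s) = 0 := by
    rw [← heq]; exact cr_segPt_self _ _ _
  rw [cr_segPt] at hzero
  have hb0 : 0 < relPos n a b := relPos_pos (Ne.symm hab)
  have hc0 : 0 < relPos n a c := relPos_pos hca
  have hd0 : 0 < relPos n a d := relPos_pos hda
  have hcb' : relPos n a c ≠ relPos n a b := fun h => hcb (relPos_inj h)
  have hdb' : relPos n a d ≠ relPos n a b := fun h => hdb (relPos_inj h)
  rcases lt_or_gt_of_ne hcb' with h1 | h1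
  · have h2 : relPos n a d < relPos n a b := by
      rcases lt_or_gt_of_ne hdb' with h | h
      · exact h
      · exact absurd (Or.inl (show CyclicallyOrdered n a c b d from ⟨hc0, h1, h⟩)) hX
    have g1 := cr_neg hca hb0 h1
    have g2 := cr_neg hda hb0 h2
    nlinarith
  · have h2 : relPos n a b < relPos n a d := by
      rcases lt_or_gt_of_ne hdb' with h | h
      · exact absurd (Or.inr (show CyclicallyOrdered n a d b c from ⟨hd0, h, h1⟩)) hX
      · exact h
    have g1 := cr_pos hb0 h1
    have g2 := cr_pos hb0 h2
    nlinarith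

lemma unit_comb' {u1 u2 v1 v2 w1 w2 c t : ℝ} (hU : u1^2+u2^2 = 1) (hV : v1^2+v2^2 = 1)
    (hW : w1^2+w2^2 = 1) (h1 : c*w1 = (c-t)*u1 + t*v1) (h2 : c*w2 = (c-t)*u2 + t*v2)
    (hne : ¬(u1 = v1 ∧ u2 = v2)) : t = 0 ∨ t = c := by
  have hQ : 0 < (u1-v1)^2 + (u2-v2)^2 := by
    rcases lt_or_eq_of_le (by positivity : (0:ℝ) ≤ (u1-v1)^2 + (u2-v2)^2) with h | h
    · exact h
    · exfalso
      have e1 : (u1 - v1)^2 = 0 := by nlinarith [sq_nonneg (u1-v1), sq_nonneg (u2-v2)]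
      have e2 : (u2 - v2)^2 = 0 := by nlinarith [sq_nonneg (u1-v1), sq_nonneg (u2-v2)]
      exact hne ⟨sub_eq_zero.mp (pow_eq_zero_iff two_ne_zero |>.mp e1),
        sub_eq_zero.mp (pow_eq_zero_iff two_ne_zero |>.mp e2)⟩
  have key : t * (c - t) * ((u1-v1)^2 + (u2-v2)^2) = 0 := by
    linear_combination ((c-t)^2 + t*(c-t))*hU + (t^2 + t*(c-t))*hV - c^2*hW
      + (c*w1+(c-t)*u1+t*v1)*h1 + (c*w2+(c-t)*u2+t*v2)*h2
  rcases mul_eq_zero.mp key with h | h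
  · rcases mul_eq_zero.mp h with h' | h'
    · exact Or.inl h'
    · exact Or.inr (by linarith)
  · exact absurd h (ne_of_gt hQ)

lemma crossesAt_symm_cd {a b c d : ZMod n} {t : ℝ} (h : CrossesAt n a b c d t) :
    CrossesAt n a b d c t := by
  obtain ⟨ht0, ht1, s, hs0, hs1, heq⟩ := h
  exact ⟨ht0, ht1, 1-s, by linarith, by linarith, by rw [heq, segPt_comm]⟩

lemma crossesAt_symm_ab {a b c d : ZMod n} {t : ℝ} (h : CrossesAt n a b c d t) :
    CrossesAt n b a c d (1-t) := by
  obtain ⟨ht0, ht1, s, hs0, hs1, heq⟩ := h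
  exact ⟨by linarith, by linarith, s, hs0, hs1, by rw [segPt_comm, heq]⟩

lemma crossesAt_left_eq {a b d : ZMod n} {t : ℝ}
    (hab : a ≠ b) (h : CrossesAt n a b a d t) : d = b := by
  obtain ⟨ht0, ht1, s, hs0, hs1, heq⟩ := h
  have hAB : vtx n a ≠ vtx n b := fun hh => hab (vtx_inj hh)
  have hfst := congrArg Prod.fst heq
  have hsnd := congrArg Prod.snd heq
  simp only [segPt] at hfst hsnd
  have e1 : s * (vtx n d).1 = (s - t) * (vtx n a).1 + t * (vtx n b).1 := by
    linear_combination -hfst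
  have e2 : s * (vtx n d).2 = (s - t) * (vtx n a).2 + t * (vtx n b).2 := by
    linear_combination -hsnd
  have hne : ¬((vtx n a).1 = (vtx n b).1 ∧ (vtx n a).2 = (vtx n b).2) := by
    rintro ⟨p, q⟩; exact hAB (Prod.ext p q)
  rcases unit_comb' (vtx_norm a) (vtx_norm b) (vtx_norm d) e1 e2 hne with h0 | h0
  · exact absurd h0 (ne_of_gt ht0)
  · have hs0' : s ≠ 0 := ne_of_gt hs0
    apply vtx_inj
    apply Prod.ext
    · apply mul_left_cancel₀ hs0'
      rw [e1, h0]; ring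
    · apply mul_left_cancel₀ hs0'
      rw [e2, h0]; ring

lemma crossesAt_c_eq_b {a b d : ZMod n} {t : ℝ}
    (hab : a ≠ b) (h : CrossesAt n a b b d t) : d = a :=
  crossesAt_left_eq (Ne.symm hab) (crossesAt_symm_ab h)

lemma crossesAt_d_eq_a {a b c : ZMod n} {t : ℝ}
    (hab : a ≠ b) (h : CrossesAt n a b c a t) : c = b :=
  crossesAt_left_eq hab (crossesAt_symm_cd h)

lemma crossesAt_d_eq_b {a b c : ZMod n} {t : ℝ}
    (hab : a ≠ b) (h : CrossesAt n a b c b t) : c = a :=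
  crossesAt_c_eq_b hab (crossesAt_symm_cd h)

lemma cyclic_rot {a b c d : ZMod n} (h : CyclicallyOrdered n a b c d) :
    CyclicallyOrdered n c d a b := by
  obtain ⟨h1, h2, h3⟩ := h
  have hv1 : 0 < (b - a).val := h1
  have hv2 : (b - a).val < (c - a).val := h2
  have hv3 : (c - a).val < (d - a).val := h3
  have hbn : (b - a).val < n := ZMod.val_lt _
  have hcn : (c - a).val < n := ZMod.val_lt _
  have hdn : (d - a).val < n := ZMod.val_lt _
  have hca : c - a ≠ 0 := by
    intro hh
    rw [hh, ZMod.val_zero] at hv2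
    omega
  haveI : NeZero (c - a) := ⟨hca⟩
  have e1 : relPos n c d = relPos n a d - relPos n a c := by
    show (d - c).val = (d - a).val - (c - a).val
    rw [show d - c = (d - a) - (c - a) by ring]
    exact ZMod.val_sub (le_of_lt hv3)
  have e2 : relPos n c a = n - relPos n a c := by
    show (a - c).val = n - (c - a).val
    rw [show a - c = -(c - a) by ring]
    exact ZMod.val_neg_of_ne_zero _
  have e3 : relPos n c b = relPos n a b + n - relPos n a c := by
    show (b - c).val = (b - a).val + n - (c - a).val
    rw [show b - c = (b - a) + -(c - a) by ring, ZMod.val_add, ZMod.val_neg_of_ne_zero]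
    have hlt : (b - a).val + (n - (c - a).val) < n := by omega
    rw [Nat.mod_eq_of_lt hlt]
    omega
  have g1 : 0 < relPos n a d - relPos n a c := by
    show 0 < (d - a).val - (c - a).val; omega
  have g2 : relPos n a d - relPos n a c < n - relPos n a c := by
    show (d - a).val - (c - a).val < n - (c - a).val; omega
  have g3 : n - relPos n a c < relPos n a b + n - relPos n a c := by
    show n - (c - a).val < (b - a).val + n - (c - a).val; omega
  exact ⟨by rw [e1]; exact g1, by rw [e1, e2]; exact g2, by rw [e2, e3]; exact g3⟩

lemma crosses_swap {a b c d : ZMod n} : Crosses n b a c d ↔ Crosses n a b c d := by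
  constructor
  · rintro (h | h)
    · exact Or.inr (cyclic_rot h)
    · exact Or.inl (cyclic_rot h)
  · rintro (h | h)
    · exact Or.inr (cyclic_rot h)
    · exact Or.inl (cyclic_rot h)

end ZModFacts

end TPRaux


namespace TPRaux

lemma getD_reverse {n : ℕ} (l : List (ZMod n)) {i : ℕ} (h : i < l.length) :
    l.reverse.getD i 0 = l.getD (l.length - 1 - i) 0 := by
  rw [List.getD_eq_getElem _ _ (by simpa using h), List.getD_eq_getElem _ _ (by omega)]
  exact List.getElem_reverse _

/-- Every T-path has an even number of vertices. -/
lemma tpath_even {n : ℕ} [NeZero n] {D : Set (Sym2 (ZMod n))} (hD : IsDissection n D)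
    {a b : ZMod n} (hab : a ≠ b) {l : List (ZMod n)} (hl : IsTPathOn n Set.univ D a b l) :
    Even l.length := by
  obtain ⟨hlen, hfirst, hlast, hmem, hadj, hdiff, hnc, hDmem, t, hcr, hmono⟩ := hl
  by_contra hodd
  rw [Nat.not_even_iff_odd] at hodd
  have hodd' := Nat.odd_iff.mp hodd
  have hp3 : 3 ≤ l.length := by omega
  have hp2 : Odd (l.length - 2) := by rw [Nat.odd_iff]; omega
  have hp2lt : (l.length - 2) + 1 < l.length := by omega
  have hstep : s(l.getD (l.length - 2) 0, l.getD ((l.length - 2) + 1) 0) ∈ D :=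
    hDmem _ hp2 hp2lt
  have hlastv : l.getD ((l.length - 2) + 1) 0 = b := by
    rw [show (l.length - 2) + 1 = l.length - 1 by omega]; exact hlast
  have hCA : CrossesAt n a b (l.getD (l.length - 2) 0) (l.getD ((l.length - 2) + 1) 0)
      (t (l.length - 2)) := hcr _ hp2 hp2lt
  rw [hlastv] at hCA
  have hceq : l.getD (l.length - 2) 0 = a := crossesAt_d_eq_b hab hCA
  rw [hceq, hlastv] at hstep
  by_cases hp3' : l.length = 3
  · have h01 := hadj 0 (by omega)
    apply h01
    rw [hfirst, show (0:ℕ) + 1 = l.length - 2 by omega, hceq]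
  · have hp5 : 5 ≤ l.length := by omega
    have h1lt : (1:ℕ) + 1 < l.length := by omega
    have hstep1 : s(l.getD 1 0, l.getD (1 + 1) 0) ∈ D := hDmem 1 odd_one h1lt
    have hCA1 : CrossesAt n a b (l.getD 1 0) (l.getD (1 + 1) 0) (t 1) := hcr 1 odd_one h1lt
    have hdiag_ne : s(l.getD 1 0, l.getD (1 + 1) 0) ≠ s(a, b) := by
      have h := hdiff 1 (l.length - 2) (by omega) (by omega)
      rw [hceq, hlastv] at h
      exact h
    have h1a : l.getD 1 0 ≠ a := by
      intro h
      have hCA' := hCA1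
      rw [h] at hCA'
      have h2b : l.getD (1 + 1) 0 = b := crossesAt_left_eq hab hCA'
      exact hdiag_ne (by rw [h, h2b])
    have h1b : l.getD 1 0 ≠ b := by
      intro h
      have hCA' := hCA1
      rw [h] at hCA'
      have h2a : l.getD (1 + 1) 0 = a := crossesAt_c_eq_b hab hCA'
      exact hdiag_ne (by rw [h, h2a, Sym2.eq_swap])
    have h2a : l.getD (1 + 1) 0 ≠ a := by
      intro h
      have hCA' := hCA1
      rw [h] at hCA'
      have h1b' : l.getD 1 0 = b := crossesAt_d_eq_a hab hCA'
      exact hdiag_ne (by rw [h, h1b', Sym2.eq_swap])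
    have h2b : l.getD (1 + 1) 0 ≠ b := by
      intro h
      have hCA' := hCA1
      rw [h] at hCA'
      have h1a' : l.getD 1 0 = a := crossesAt_d_eq_b hab hCA'
      exact hdiag_ne (by rw [h, h1a'])
    have hnoX : ¬ Crosses n a b (l.getD 1 0) (l.getD (1 + 1) 0) :=
      hD.2 a b (l.getD 1 0) (l.getD (1 + 1) 0) hstep hstep1
    exact not_crossesAt hab h1a h1b h2a h2b hnoX (t 1) hCA1

/-- The reversal of a T-path from `a` to `b` is a T-path from `b` to `a`. -/
lemma reverse_tpath {n : ℕ} [NeZero n] {D : Set (Sym2 (ZMod n))} (hD : IsDissection n D)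
    {a b : ZMod n} (hab : a ≠ b) {l : List (ZMod n)} (hl : IsTPathOn n Set.univ D a b l) :
    IsTPathOn n Set.univ D b a l.reverse := by
  have hev := Nat.even_iff.mp (tpath_even hD hab hl)
  obtain ⟨hlen, hfirst, hlast, hmem, hadj, hdiff, hnc, hDmem, t, hcr, hmono⟩ := hl
  have hrevlen : l.reverse.length = l.length := List.length_reverse
  have hg : ∀ i, i < l.length → l.reverse.getD i 0 = l.getD (l.length - 1 - i) 0 :=
    fun i hi => getD_reverse l hi
  refine ⟨by omega, ?_, ?_, fun _ _ => Set.mem_univ _, ?_, ?_, ?_, ?_, ?_⟩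
  · rw [hg 0 (by omega), show l.length - 1 - 0 = l.length - 1 by omega]
    exact hlast
  · rw [hrevlen, hg (l.length - 1) (by omega),
      show l.length - 1 - (l.length - 1) = 0 by omega]
    exact hfirst
  · intro i hi
    rw [hrevlen] at hi
    rw [hg i (by omega), hg (i + 1) (by omega),
      show l.length - 1 - i = (l.length - 2 - i) + 1 by omega,
      show l.length - 1 - (i + 1) = l.length - 2 - i by omega]
    exact (hadj (l.length - 2 - i) (by omega)).symm
  · intro i j hij hj
    rw [hrevlen] at hj
    rw [hg i (by omega), hg (i + 1) (by omega), hg j (by omega), hg (j + 1) (by omega),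
      show l.length - 1 - i = (l.length - 2 - i) + 1 by omega,
      show l.length - 1 - (i + 1) = l.length - 2 - i by omega,
      show l.length - 1 - j = (l.length - 2 - j) + 1 by omega,
      show l.length - 1 - (j + 1) = l.length - 2 - j by omega]
    intro hEq
    apply hdiff (l.length - 2 - j) (l.length - 2 - i) (by omega) (by omega)
    exact Sym2.eq_swap.trans (hEq.symm.trans Sym2.eq_swap)
  · intro i hi c d hcd
    rw [hrevlen] at hi
    rw [hg i (by omega), hg (i + 1) (by omega),
      show l.length - 1 - i = (l.length - 2 - i) + 1 by omega,
      show l.length - 1 - (i + 1) = l.length - 2 - i by omega]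
    intro hX
    exact hnc (l.length - 2 - i) (by omega) c d hcd (crosses_swap.mp hX)
  · intro i hiodd hi
    rw [hrevlen] at hi
    rw [hg i (by omega), hg (i + 1) (by omega),
      show l.length - 1 - i = (l.length - 2 - i) + 1 by omega,
      show l.length - 1 - (i + 1) = l.length - 2 - i by omega]
    have hodd' : Odd (l.length - 2 - i) := by
      rw [Nat.odd_iff] at hiodd ⊢
      omega
    rw [Sym2.eq_swap]
    exact hDmem (l.length - 2 - i) hodd' (by omega)
  · refine ⟨fun i => 1 - t (l.length - 2 - i), ?_, ?_⟩
    · intro i hiodd hi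
      rw [hrevlen] at hi
      rw [hg i (by omega), hg (i + 1) (by omega),
        show l.length - 1 - i = (l.length - 2 - i) + 1 by omega,
        show l.length - 1 - (i + 1) = l.length - 2 - i by omega]
      have hodd' : Odd (l.length - 2 - i) := by
        rw [Nat.odd_iff] at hiodd ⊢
        omega
      exact crossesAt_symm_cd (crossesAt_symm_ab (hcr (l.length - 2 - i) hodd' (by omega)))
    · intro i j hiodd hjodd hij hj
      rw [hrevlen] at hj
      have hoi : Odd (l.length - 2 - i) := by
        rw [Nat.odd_iff] at hiodd ⊢; omega
      have hoj : Odd (l.length - 2 - j) := by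
        rw [Nat.odd_iff] at hjodd ⊢; omega
      have := hmono (l.length - 2 - j) (l.length - 2 - i) hoj hoi (by omega) (by omega)
      show 1 - t (l.length - 2 - i) < 1 - t (l.length - 2 - j)
      linarith

lemma mem_TPathFinsetOn {n : ℕ} [NeZero n] {W : Set (ZMod n)} {D : Set (Sym2 (ZMod n))}
    {a b : ZMod n} {l : List (ZMod n)} :
    l ∈ TPathFinsetOn n W D a b ↔ l.length < n * n + 2 ∧ IsTPathOn n W D a b l := by
  classical
  unfold TPathFinsetOn
  rw [Finset.mem_filter, Finset.mem_biUnion]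
  constructor
  · rintro ⟨⟨k, hk, hl⟩, h2⟩
    refine ⟨?_, h2⟩
    rw [Finset.mem_image] at hl
    obtain ⟨g, _, rfl⟩ := hl
    rw [List.length_ofFn]
    exact Finset.mem_range.mp hk
  · rintro ⟨h1, h2⟩
    refine ⟨⟨l.length, Finset.mem_range.mpr h1, ?_⟩, h2⟩
    rw [Finset.mem_image]
    exact ⟨l.get, Finset.mem_univ _, List.ofFn_get l⟩

lemma weight_reverse {n : ℕ} [NeZero n] {K : Type*} [CommGroup K] (f : ZMod n → ZMod n → K)
    (hf : ∀ x y, f x y = f y x) {l : List (ZMod n)} (hev : Even l.length)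
    (hlen : 2 ≤ l.length) :
    pathWeight n f l.reverse = pathWeight n f l := by
  have hev' := Nat.even_iff.mp hev
  have hg : ∀ i, i < l.length → l.reverse.getD i 0 = l.getD (l.length - 1 - i) 0 :=
    fun i hi => getD_reverse l hi
  unfold pathWeight
  rw [List.length_reverse]
  have main : ∀ (Q : ℕ → Prop) (_ : DecidablePred Q),
      (∀ i, i < l.length - 1 → (Q i ↔ Q (l.length - 2 - i))) →
      ∏ i ∈ (Finset.range (l.length - 1)).filter Q,
          f (l.reverse.getD i 0) (l.reverse.getD (i + 1) 0)
        = ∏ i ∈ (Finset.range (l.length - 1)).filter Q,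
            f (l.getD i 0) (l.getD (i + 1) 0) := by
    intro Q _ hQ
    refine Finset.prod_nbij' (fun i => l.length - 2 - i) (fun i => l.length - 2 - i)
      ?_ ?_ ?_ ?_ ?_
    · intro i hi
      show l.length - 2 - i ∈ (Finset.range (l.length - 1)).filter Q
      rw [Finset.mem_filter, Finset.mem_range] at hi ⊢
      exact ⟨by omega, (hQ i (by omega)).mp hi.2⟩
    · intro i hi
      show l.length - 2 - i ∈ (Finset.range (l.length - 1)).filter Q
      rw [Finset.mem_filter, Finset.mem_range] at hi ⊢
      exact ⟨by omega, (hQ i (by omega)).mp hi.2⟩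
    · intro i hi
      rw [Finset.mem_filter, Finset.mem_range] at hi
      show l.length - 2 - (l.length - 2 - i) = i
      omega
    · intro i hi
      rw [Finset.mem_filter, Finset.mem_range] at hi
      show l.length - 2 - (l.length - 2 - i) = i
      omega
    · intro i hi
      rw [Finset.mem_filter, Finset.mem_range] at hi
      rw [hg i (by omega), hg (i + 1) (by omega),
        show l.length - 1 - i = (l.length - 2 - i) + 1 by omega,
        show l.length - 1 - (i + 1) = l.length - 2 - i by omega]
      exact hf _ _
  congr 1
  · exact main (fun i => Even i) _ (fun i hi => by
      show Even i ↔ Even (l.length - 2 - i)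
      rw [Nat.even_iff, Nat.even_iff]; omega)
  · exact main (fun i => Odd i) _ (fun i hi => by
      show Odd i ↔ Odd (l.length - 2 - i)
      rw [Nat.odd_iff, Nat.odd_iff]; omega)

end TPRaux


/-- For any map `f : diag(P) → K`, the sum of the weights of the T-paths from `α` to
`β` equals the sum of the weights of the T-paths from `β` to `α`. -/
theorem tPath_sum_reverse
    (n : ℕ) [NeZero n] (hn : 3 ≤ n) {K : Type*} [PaperSemifield K]
    (D : Set (Sym2 (ZMod n))) (hD : IsDissection n D)
    (a b : ZMod n) (hab : a ≠ b)
    (f : ZMod n → ZMod n → K) (hf : SymmOn n Set.univ f) :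
    ∑ l ∈ TPathFinset n D a b, WithZero.coe (pathWeight n f l) =
      ∑ l ∈ TPathFinset n D b a, WithZero.coe (pathWeight n f l) := by
  unfold TPathFinset
  refine Finset.sum_nbij' (fun l => l.reverse) (fun l => l.reverse) ?_ ?_ ?_ ?_ ?_
  · intro l hl
    rw [TPRaux.mem_TPathFinsetOn] at hl ⊢
    exact ⟨by rw [List.length_reverse]; exact hl.1, TPRaux.reverse_tpath hD hab hl.2⟩
  · intro l hl
    rw [TPRaux.mem_TPathFinsetOn] at hl ⊢
    exact ⟨by rw [List.length_reverse]; exact hl.1, TPRaux.reverse_tpath hD hab.symm hl.2⟩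
  · intro l _
    exact List.reverse_reverse l
  · intro l _
    exact List.reverse_reverse l
  · intro l hl
    rw [TPRaux.mem_TPathFinsetOn] at hl
    have hev := TPRaux.tpath_even hD hab hl.2
    exact congrArg _ (TPRaux.weight_reverse f
      (fun x y => hf x y (Set.mem_univ x) (Set.mem_univ y)) hev hl.2.1).symm
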